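/- Let Y₁ and Y₂ be n-dimensional Banach spaces and T : Y₁ → Y₂ a linear isomorphism with ‖T‖ = 1 and ‖T⁻¹‖ = ρ. Define φ(y) := t(y)·T(y) with t(y) := ‖y‖_{Y₁}/‖Ty‖_{Y₂} for y ≠ 0 (and φ(0) = 0). Then φ maps the closed unit ball of Y₁ onto the closed unit ball of Y₂ and is (2ρ+1)-Lipschitz, i.e., ‖φ(y) − φ(z)‖_{Y₂} ≤ (2ρ+1)‖y − z‖_{Y₁} for all y, z in the closed unit ball of Y₁. -/

import Mathlib

open Classical in

/-- if `T : Y₁ → Y₂` is a linear isomorphism with `‖T‖ = 1` and `‖T⁻¹‖ = ρ`,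
then `φ(y) = (‖y‖/‖Ty‖) • Ty` maps the closed unit ball of `Y₁` onto that of `Y₂`
and is `(2ρ+1)`-Lipschitz on the closed unit ball. -/
theorem lipschitz_ball_map {Y₁ Y₂ : Type*} [NormedAddCommGroup Y₁] [NormedSpace ℝ Y₁]
    [NormedAddCommGroup Y₂] [NormedSpace ℝ Y₂]
    [FiniteDimensional ℝ Y₁] [FiniteDimensional ℝ Y₂] (n : ℕ) (hn : 1 ≤ n)
    (hd₁ : Module.finrank ℝ Y₁ = n) (hd₂ : Module.finrank ℝ Y₂ = n)
    (T : Y₁ →L[ℝ] Y₂) (S : Y₂ →L[ℝ] Y₁) (hST : ∀ y, S (T y) = y) (hTS : ∀ z, T (S z) = z)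
    (ρ : ℝ) (hT : ‖T‖ = 1) (hS : ‖S‖ = ρ) :
    ∀ φ : Y₁ → Y₂, (φ = fun y => if y = 0 then 0 else (‖y‖ / ‖T y‖) • T y) →
      ((∀ y, ‖y‖ ≤ 1 → ‖φ y‖ ≤ 1) ∧
       (∀ z, ‖z‖ ≤ 1 → ∃ y, ‖y‖ ≤ 1 ∧ φ y = z) ∧
       (∀ y z, ‖y‖ ≤ 1 → ‖z‖ ≤ 1 → ‖φ y - φ z‖ ≤ (2 * ρ + 1) * ‖y - z‖)) := by
  intro φ hφ
  have hρ0 : 0 ≤ ρ := hS ▸ norm_nonneg S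
  have hTy_ne : ∀ y : Y₁, y ≠ 0 → T y ≠ 0 := fun y hy h => hy (by rw [← hST y, h, map_zero])
  have hTle : ∀ y : Y₁, ‖T y‖ ≤ ‖y‖ := fun y => by simpa [hT] using T.le_opNorm y
  have hSle : ∀ y : Y₁, ‖y‖ ≤ ρ * ‖T y‖ := fun y => by
    have := S.le_opNorm (T y); rwa [hST, hS] at this
  have hnorm : ∀ y : Y₁, ‖φ y‖ = ‖y‖ := by
    intro y
    rw [hφ]
    by_cases hy : y = 0
    · simp [hy]
    · have h1 : ‖T y‖ ≠ 0 := norm_ne_zero_iff.mpr (hTy_ne y hy)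
      simp only [if_neg hy, norm_smul, Real.norm_eq_abs,
        abs_of_nonneg (div_nonneg (norm_nonneg _) (norm_nonneg _))]
      field_simp
  refine ⟨fun y hy => (hnorm y).le.trans hy, ?_, ?_⟩
  · intro z hz
    by_cases hz0 : z = 0
    · exact ⟨0, by simp, by simp [hφ, hz0]⟩
    · have hSz : S z ≠ 0 := fun h => hz0 (by rw [← hTS z, h, map_zero])
      have hSzn : (0:ℝ) < ‖S z‖ := norm_pos_iff.mpr hSz
      have hzn : (0:ℝ) < ‖z‖ := norm_pos_iff.mpr hz0
      set c := ‖z‖ / ‖S z‖ with hc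
      have hc0 : 0 < c := div_pos hzn hSzn
      refine ⟨c • S z, ?_, ?_⟩
      · rw [norm_smul, Real.norm_eq_abs, abs_of_pos hc0, hc]
        rw [div_mul_cancel₀ _ hSzn.ne']
        exact hz
      · have hy0 : c • S z ≠ 0 := smul_ne_zero hc0.ne' hSz
        rw [hφ]
        simp only [if_neg hy0, map_smul, hTS]
        rw [norm_smul, norm_smul, Real.norm_eq_abs, abs_of_pos hc0, smul_smul]
        have : c * ‖S z‖ / (c * ‖z‖) * c = 1 := by
          rw [hc]; field_simp
        rw [this, one_smul]
  · intro y z hy hz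
    have hone : (1:ℝ) ≤ 2 * ρ + 1 := by linarith
    have hφ0 : φ 0 = 0 := by rw [hφ]; simp
    by_cases hy0 : y = 0
    · subst hy0
      rw [hφ0, zero_sub, norm_neg, hnorm z, zero_sub, norm_neg]
      nlinarith [norm_nonneg z]
    by_cases hz0 : z = 0
    · subst hz0
      rw [hφ0, sub_zero, hnorm y, sub_zero]
      nlinarith [norm_nonneg y]
    have hTyp : (0:ℝ) < ‖T y‖ := norm_pos_iff.mpr (hTy_ne y hy0)
    have hTzp : (0:ℝ) < ‖T z‖ := norm_pos_iff.mpr (hTy_ne z hz0)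
    set a := ‖y‖ / ‖T y‖ with ha
    set b := ‖z‖ / ‖T z‖ with hb
    have hbρ : b ≤ ρ := (div_le_iff₀ hTzp).mpr (by linarith [hSle z])
    have hb0 : 0 ≤ b := div_nonneg (norm_nonneg _) hTzp.le
    have hφy : φ y = a • T y := by rw [hφ]; simp [hy0, ha]
    have hφz : φ z = b • T z := by rw [hφ]; simp [hz0, hb]
    have key : φ y - φ z = (a - b) • T y + b • (T y - T z) := by
      rw [hφy, hφz]; module
    have haT : a * ‖T y‖ = ‖y‖ := div_mul_cancel₀ _ hTyp.ne'
    have hbT : b * ‖T z‖ = ‖z‖ := div_mul_cancel₀ _ hTzp.ne'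
    have hTd : ‖T y - T z‖ ≤ ‖y - z‖ := by
      have := hTle (y - z); rwa [map_sub] at this
    have habs1 : |‖y‖ - ‖z‖| ≤ ‖y - z‖ := abs_norm_sub_norm_le y z
    have habs2 : |‖T z‖ - ‖T y‖| ≤ ‖T y - T z‖ := by
      rw [abs_sub_comm]; exact abs_norm_sub_norm_le _ _
    have hmain : |a - b| * ‖T y‖ ≤ ‖y - z‖ + ρ * ‖y - z‖ := by
      have e1 : |a - b| * ‖T y‖ = |‖y‖ - b * ‖T y‖| := by
        rw [← abs_of_pos hTyp, ← abs_mul, sub_mul, haT, abs_of_pos hTyp]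
      rw [e1]
      have e2 : |‖y‖ - b * ‖T y‖| ≤ |‖y‖ - ‖z‖| + |‖z‖ - b * ‖T y‖| := abs_sub_le _ _ _
      have e3 : |‖z‖ - b * ‖T y‖| = b * |‖T z‖ - ‖T y‖| := by
        rw [← hbT, ← mul_sub, abs_mul, abs_of_nonneg hb0]
      have e4 : b * |‖T z‖ - ‖T y‖| ≤ ρ * ‖y - z‖ := by
        calc b * |‖T z‖ - ‖T y‖| ≤ ρ * ‖T y - T z‖ :=
              mul_le_mul hbρ habs2 (abs_nonneg _) hρ0
          _ ≤ ρ * ‖y - z‖ := mul_le_mul_of_nonneg_left hTd hρ0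
      linarith [e2, e3 ▸ e4]
    calc ‖φ y - φ z‖ = ‖(a - b) • T y + b • (T y - T z)‖ := by rw [key]
      _ ≤ ‖(a - b) • T y‖ + ‖b • (T y - T z)‖ := norm_add_le _ _
      _ = |a - b| * ‖T y‖ + b * ‖T y - T z‖ := by
          rw [norm_smul, norm_smul, Real.norm_eq_abs, Real.norm_eq_abs, abs_of_nonneg hb0]
      _ ≤ (‖y - z‖ + ρ * ‖y - z‖) + ρ * ‖y - z‖ := by
          have : b * ‖T y - T z‖ ≤ ρ * ‖y - z‖ :=
            mul_le_mul hbρ hTd (norm_nonneg _) hρ0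
          linarith
      _ = (2 * ρ + 1) * ‖y - z‖ := by ring
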